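/- For every y ∈ ℝ, −(√2/√π) ∫_{−∞}^∞ e^{−2(x−y)²} (erf(x) − erf(√2 y)) dx = erf(√2 y) − erf(√(2/3) y). -/

import Mathlib

open MeasureTheory Real Filter

/-- The error function `erf`. -/
noncomputable def erf (x : ℝ) : ℝ := (2 / Real.sqrt Real.pi) * ∫ t in (0 : ℝ)..x, Real.exp (-t ^ 2)

lemma cont_gauss : Continuous fun t : ℝ => Real.exp (-t ^ 2) := by continuity

lemma erf_hasDerivAt (x : ℝ) :
    HasDerivAt erf (2 / Real.sqrt Real.pi * Real.exp (-x ^ 2)) x :=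
  ((cont_gauss.integral_hasStrictDerivAt 0 x).hasDerivAt).const_mul (2 / Real.sqrt Real.pi)

lemma erf_continuous : Continuous erf := by
  have : Differentiable ℝ erf := fun x => (erf_hasDerivAt x).differentiableAt
  exact this.continuous

lemma abs_erf_le (x : ℝ) : |erf x| ≤ 2 / Real.sqrt Real.pi * |x| := by
  have h : ‖∫ t in (0:ℝ)..x, Real.exp (-t ^ 2)‖ ≤ 1 * |x - 0| := by
    apply intervalIntegral.norm_integral_le_of_norm_le_const
    intro t ht
    rw [Real.norm_eq_abs, abs_of_pos (Real.exp_pos _)]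
    exact Real.exp_le_one_iff.mpr (by nlinarith [sq_nonneg t])
  rw [erf, abs_mul, abs_of_nonneg (by positivity : (0:ℝ) ≤ 2 / Real.sqrt Real.pi)]
  simp only [Real.norm_eq_abs, one_mul, sub_zero] at h
  exact mul_le_mul_of_nonneg_left h (by positivity)

lemma integrable_quad_gauss {b : ℝ} (hb : 0 < b) (a₀ a₁ a₂ : ℝ) :
    Integrable fun x : ℝ => (a₀ + a₁ * |x| + a₂ * x ^ 2) * Real.exp (-b * x ^ 2) := by
  have h0 : Integrable fun x : ℝ => a₀ * Real.exp (-b * x ^ 2) :=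
    (integrable_exp_neg_mul_sq hb).const_mul a₀
  have h1 : Integrable fun x : ℝ => a₁ * (|x| * Real.exp (-b * x ^ 2)) := by
    refine Integrable.const_mul ?_ a₁
    have := (integrable_mul_exp_neg_mul_sq hb).abs
    refine this.congr (Eventually.of_forall fun x => ?_)
    simp only [abs_mul, abs_of_pos (Real.exp_pos _)]
  have h2 : Integrable fun x : ℝ => a₂ * (x ^ 2 * Real.exp (-b * x ^ 2)) := by
    refine Integrable.const_mul ?_ a₂
    refine Integrable.mono' (((integrable_exp_neg_mul_sq (by linarith : 0 < b/2)).const_mul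
      (2/b))) (((continuous_pow 2).mul (by continuity)).aestronglyMeasurable)
      (Eventually.of_forall fun x => ?_)
    rw [Real.norm_eq_abs, abs_of_nonneg (by positivity)]
    have h := Real.add_one_le_exp (b/2 * x ^ 2)
    have h2b : (0:ℝ) < 2/b := by positivity
    have hx2 : x ^ 2 ≤ 2/b * Real.exp (b/2 * x ^ 2) := by
      have := mul_le_mul_of_nonneg_left h h2b.le
      have hbb : 2/b * (b/2 * x ^ 2) = x ^ 2 := by field_simp
      nlinarith [Real.exp_pos (b/2 * x ^ 2)]
    calc x ^ 2 * Real.exp (-b * x ^ 2)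
        ≤ (2/b * Real.exp (b/2 * x ^ 2)) * Real.exp (-b * x ^ 2) := by
          apply mul_le_mul_of_nonneg_right hx2 (Real.exp_pos _).le
      _ = 2/b * Real.exp (-(b/2) * x ^ 2) := by
          rw [mul_assoc, ← Real.exp_add]; ring_nf
  refine ((h0.add h1).add h2).congr (Eventually.of_forall fun x => ?_)
  simp only [Pi.add_apply]; ring

lemma integrable_quad_gauss_shift {b : ℝ} (hb : 0 < b) (c a₀ a₁ a₂ : ℝ) :
    Integrable fun x : ℝ =>
      (a₀ + a₁ * |x - c| + a₂ * (x - c) ^ 2) * Real.exp (-b * (x - c) ^ 2) :=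
  (integrable_quad_gauss hb a₀ a₁ a₂).comp_sub_right c

lemma integrable_gauss_erf {b : ℝ} (hb : 0 < b) (c : ℝ) :
    Integrable fun x : ℝ => Real.exp (-b * (x - c) ^ 2) * erf x := by
  refine (integrable_quad_gauss_shift hb c (2 / Real.sqrt Real.pi * |c|)
    (2 / Real.sqrt Real.pi) 0).mono'
    (((by continuity : Continuous fun x : ℝ => Real.exp (-b * (x - c) ^ 2)).mul erf_continuous).aestronglyMeasurable)
    (Eventually.of_forall fun x => ?_)
  rw [Real.norm_eq_abs, abs_mul, abs_of_pos (Real.exp_pos _)]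
  have h1 : |erf x| ≤ 2 / Real.sqrt Real.pi * (|x - c| + |c|) := by
    refine (abs_erf_le x).trans ?_
    have : |x| ≤ |x - c| + |c| := by
      calc |x| = |(x - c) + c| := by ring_nf
        _ ≤ |x - c| + |c| := abs_add_le _ _
    exact mul_le_mul_of_nonneg_left this (by positivity)
  calc Real.exp (-b * (x - c) ^ 2) * |erf x|
      ≤ Real.exp (-b * (x - c) ^ 2) * (2 / Real.sqrt Real.pi * (|x - c| + |c|)) :=
        mul_le_mul_of_nonneg_left h1 (Real.exp_pos _).le
    _ = (2 / Real.sqrt Real.pi * |c| + 2 / Real.sqrt Real.pi * |x - c| + 0 * (x - c) ^ 2) *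
        Real.exp (-b * (x - c) ^ 2) := by ring

lemma gauss_prod (y : ℝ) :
    (∫ x : ℝ, Real.exp (-x ^ 2) * Real.exp (-2 * (x - y) ^ 2))
      = Real.sqrt (Real.pi / 3) * Real.exp (-(2/3) * y ^ 2) := by
  have key : ∀ x : ℝ, Real.exp (-x ^ 2) * Real.exp (-2 * (x - y) ^ 2)
      = Real.exp (-(2/3) * y ^ 2) * Real.exp (-3 * (x - 2 * y / 3) ^ 2) := by
    intro x
    rw [← Real.exp_add, ← Real.exp_add]
    congr 1
    ring
  simp_rw [key]
  rw [MeasureTheory.integral_const_mul,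
    integral_sub_right_eq_self (fun x : ℝ => Real.exp (-3 * x ^ 2)) (2 * y / 3),
    integral_gaussian]
  ring

lemma neg_gauss_hasDerivAt (y x : ℝ) :
    HasDerivAt (fun x : ℝ => -Real.exp (-2 * (x - y) ^ 2))
      (4 * (x - y) * Real.exp (-2 * (x - y) ^ 2)) x := by
  have h1 : HasDerivAt (fun x : ℝ => -2 * (x - y) ^ 2) (-4 * (x - y)) x := by
    have h := (((hasDerivAt_id x).sub_const y).pow 2).const_mul (-2 : ℝ)
    simp only [id] at h
    refine h.congr_deriv ?_
    push_cast
    ring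
  have h2 := (h1.exp).neg
  refine h2.congr_deriv ?_
  ring

lemma ibp_value (y : ℝ) :
    (∫ x : ℝ, erf x * (4 * (x - y) * Real.exp (-2 * (x - y) ^ 2)))
      = 2 / Real.sqrt 3 * Real.exp (-(2/3) * y ^ 2) := by
  have huv' : Integrable (erf * fun x : ℝ => 4 * (x - y) * Real.exp (-2 * (x - y) ^ 2)) := by
    refine (integrable_quad_gauss_shift two_pos y (8 / Real.sqrt Real.pi * |y|)
      (8 / Real.sqrt Real.pi * (1 + |y|)) (8 / Real.sqrt Real.pi)).mono'
      ((erf_continuous.mul (by continuity)).aestronglyMeasurable)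
      (Eventually.of_forall fun x => ?_)
    simp only [Pi.mul_apply, Real.norm_eq_abs, abs_mul]
    rw [abs_of_pos (Real.exp_pos _), abs_of_nonneg (by norm_num : (0:ℝ) ≤ 4)]
    have h1 : |erf x| ≤ 2 / Real.sqrt Real.pi * (|x - y| + |y|) := by
      refine (abs_erf_le x).trans (mul_le_mul_of_nonneg_left ?_ (by positivity))
      calc |x| = |(x - y) + y| := by ring_nf
        _ ≤ |x - y| + |y| := abs_add_le _ _
    have hsq : |x - y| ^ 2 = (x - y) ^ 2 := sq_abs _
    calc |erf x| * (4 * |x - y| * Real.exp (-2 * (x - y) ^ 2))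
        ≤ (2 / Real.sqrt Real.pi * (|x - y| + |y|)) *
            (4 * |x - y| * Real.exp (-2 * (x - y) ^ 2)) := by
          apply mul_le_mul_of_nonneg_right h1 (by positivity)
      _ = (2 / Real.sqrt Real.pi * (|x - y| + |y|) * (4 * |x - y|)) *
            Real.exp (-2 * (x - y) ^ 2) := by ring
      _ ≤ (8 / Real.sqrt Real.pi * |y| + 8 / Real.sqrt Real.pi * (1 + |y|) * |x - y| +
            8 / Real.sqrt Real.pi * (x - y) ^ 2) * Real.exp (-2 * (x - y) ^ 2) := by
          have hx : (0:ℝ) ≤ |x - y| := abs_nonneg _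
          have hy : (0:ℝ) ≤ |y| := abs_nonneg _
          have hp : (0:ℝ) ≤ 8 / Real.sqrt Real.pi := by positivity
          refine mul_le_mul_of_nonneg_right ?_ (Real.exp_pos _).le
          rw [← hsq]
          set s := |x - y| with hs
          have expand : 2 / Real.sqrt Real.pi * (s + |y|) * (4 * s)
              = 8 / Real.sqrt Real.pi * s ^ 2 + 8 / Real.sqrt Real.pi * |y| * s := by ring
          have expand2 : 8 / Real.sqrt Real.pi * (1 + |y|) * s
              = 8 / Real.sqrt Real.pi * s + 8 / Real.sqrt Real.pi * |y| * s := by ring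
          rw [expand, expand2]
          linarith [mul_nonneg hp hy, mul_nonneg hp hx]
  have hu'v : Integrable ((fun x : ℝ => 2 / Real.sqrt Real.pi * Real.exp (-x ^ 2)) *
      fun x : ℝ => -Real.exp (-2 * (x - y) ^ 2)) := by
    refine ((integrable_exp_neg_mul_sq one_pos).const_mul (2 / Real.sqrt Real.pi)).mono'
      (((by continuity : Continuous fun x : ℝ => 2 / Real.sqrt Real.pi * Real.exp (-x ^ 2)).mul
        (by continuity : Continuous fun x : ℝ => -Real.exp (-2 * (x - y) ^ 2))).aestronglyMeasurable)
      (Eventually.of_forall fun x => ?_)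
    simp only [Pi.mul_apply, Real.norm_eq_abs, abs_mul, abs_neg,
      abs_of_pos (Real.exp_pos _), abs_of_nonneg (by positivity : (0:ℝ) ≤ 2 / Real.sqrt Real.pi)]
    have : Real.exp (-2 * (x - y) ^ 2) ≤ 1 :=
      Real.exp_le_one_iff.mpr (by nlinarith [sq_nonneg (x - y)])
    calc 2 / Real.sqrt Real.pi * Real.exp (-x ^ 2) * Real.exp (-2 * (x - y) ^ 2)
        ≤ 2 / Real.sqrt Real.pi * Real.exp (-x ^ 2) * 1 :=
          mul_le_mul_of_nonneg_left this (by positivity)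
      _ = 2 / Real.sqrt Real.pi * Real.exp (-(1:ℝ) * x ^ 2) := by ring_nf
  have huv : Integrable (erf * fun x : ℝ => -Real.exp (-2 * (x - y) ^ 2)) := by
    have := (integrable_gauss_erf two_pos y).neg
    refine this.congr (Eventually.of_forall fun x => ?_)
    simp only [Pi.mul_apply, Pi.neg_apply]; ring
  have hIBP := integral_mul_deriv_eq_deriv_mul_of_integrable
    (u := erf) (u' := fun x : ℝ => 2 / Real.sqrt Real.pi * Real.exp (-x ^ 2))
    (v := fun x : ℝ => -Real.exp (-2 * (x - y) ^ 2))
    (v' := fun x : ℝ => 4 * (x - y) * Real.exp (-2 * (x - y) ^ 2))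
    (fun x _ => erf_hasDerivAt x) (fun x _ => neg_gauss_hasDerivAt y x) huv' hu'v huv
  rw [hIBP, ← integral_neg]
  have : ∀ x : ℝ, -(2 / Real.sqrt Real.pi * Real.exp (-x ^ 2) * -Real.exp (-2 * (x - y) ^ 2))
      = 2 / Real.sqrt Real.pi * (Real.exp (-x ^ 2) * Real.exp (-2 * (x - y) ^ 2)) := by
    intro x; ring
  simp_rw [this]
  rw [MeasureTheory.integral_const_mul, gauss_prod]
  have hπ : Real.sqrt Real.pi ≠ 0 := (Real.sqrt_pos.mpr Real.pi_pos).ne'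
  have h3 : Real.sqrt (Real.pi / 3) = Real.sqrt Real.pi / Real.sqrt 3 := by
    rw [Real.sqrt_div Real.pi_pos.le]
  rw [h3]
  field_simp

lemma Phi_hasDerivAt (y₀ : ℝ) :
    HasDerivAt (fun y : ℝ => ∫ x : ℝ, Real.exp (-2 * (x - y) ^ 2) * erf x)
      (2 / Real.sqrt 3 * Real.exp (-(2/3) * y₀ ^ 2)) y₀ := by
  set a₂ : ℝ := 8 / Real.sqrt Real.pi * Real.exp 2 with ha₂
  set a₁ : ℝ := a₂ * (1 + |y₀|) with ha₁
  set a₀ : ℝ := a₂ * |y₀| with ha₀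
  have ha₂0 : 0 ≤ a₂ := by positivity
  have key := hasDerivAt_integral_of_dominated_loc_of_deriv_le
    (F := fun y x => Real.exp (-2 * (x - y) ^ 2) * erf x)
    (F' := fun y x => erf x * (4 * (x - y) * Real.exp (-2 * (x - y) ^ 2)))
    (x₀ := y₀) (s := Metric.ball y₀ 1)
    (bound := fun x => (a₀ + a₁ * |x - y₀| + a₂ * (x - y₀) ^ 2) * Real.exp (-(x - y₀) ^ 2))
    (Metric.ball_mem_nhds y₀ one_pos)
    (Eventually.of_forall fun y =>
      (((by continuity : Continuous fun x : ℝ => Real.exp (-2 * (x - y) ^ 2)).mul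
        erf_continuous).aestronglyMeasurable))
    (integrable_gauss_erf two_pos y₀)
    ((erf_continuous.mul (by continuity)).aestronglyMeasurable)
    (Eventually.of_forall fun x => ?_) ?_ (Eventually.of_forall fun x => ?_)
  · have := key.2
    rwa [ibp_value y₀] at this
  · -- bound
    intro y hy
    rw [Metric.mem_ball, Real.dist_eq] at hy
    have hd2 : (y - y₀) ^ 2 < 1 := by
      have := sq_abs (y - y₀)
      nlinarith [abs_nonneg (y - y₀)]
    have h1 : |erf x| ≤ 2 / Real.sqrt Real.pi * (|x - y₀| + |y₀|) := by
      refine (abs_erf_le x).trans (mul_le_mul_of_nonneg_left ?_ (by positivity))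
      calc |x| = |(x - y₀) + y₀| := by ring_nf
        _ ≤ |x - y₀| + |y₀| := abs_add_le _ _
    have h2 : |x - y| ≤ |x - y₀| + 1 := by
      calc |x - y| = |(x - y₀) - (y - y₀)| := by congr 1; ring
        _ ≤ |x - y₀| + |y - y₀| := abs_sub _ _
        _ ≤ |x - y₀| + 1 := by linarith
    have h3 : Real.exp (-2 * (x - y) ^ 2) ≤ Real.exp 2 * Real.exp (-(x - y₀) ^ 2) := by
      rw [← Real.exp_add]
      apply Real.exp_le_exp.mpr
      nlinarith [sq_nonneg (x - y₀ - 2 * (y - y₀))]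
    calc ‖erf x * (4 * (x - y) * Real.exp (-2 * (x - y) ^ 2))‖
        = |erf x| * (4 * |x - y| * Real.exp (-2 * (x - y) ^ 2)) := by
          rw [Real.norm_eq_abs, abs_mul, abs_mul, abs_mul,
            abs_of_pos (Real.exp_pos _), abs_of_nonneg (by norm_num : (0:ℝ) ≤ 4)]
      _ ≤ |erf x| * (4 * (|x - y₀| + 1) * (Real.exp 2 * Real.exp (-(x - y₀) ^ 2))) := by
          refine mul_le_mul_of_nonneg_left ?_ (abs_nonneg _)
          refine mul_le_mul (by linarith) h3 (Real.exp_pos _).le (by positivity)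
      _ ≤ (2 / Real.sqrt Real.pi * (|x - y₀| + |y₀|)) *
            (4 * (|x - y₀| + 1) * (Real.exp 2 * Real.exp (-(x - y₀) ^ 2))) := by
          refine mul_le_mul_of_nonneg_right h1 (by positivity)
      _ = (a₀ + a₁ * |x - y₀| + a₂ * (x - y₀) ^ 2) * Real.exp (-(x - y₀) ^ 2) := by
          rw [ha₀, ha₁, ha₂, ← sq_abs (x - y₀)]
          ring
  · -- integrability of the bound
    have := integrable_quad_gauss_shift one_pos y₀ a₀ a₁ a₂
    refine this.congr (Eventually.of_forall fun x => ?_)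
    norm_num
  · -- differentiability
    intro y hy
    have h1 : HasDerivAt (fun y : ℝ => -2 * (x - y) ^ 2) (4 * (x - y)) y := by
      have h := (((hasDerivAt_const y x).sub (hasDerivAt_id y)).pow 2).const_mul (-2 : ℝ)
      simp only [Pi.sub_apply, id] at h
      refine h.congr_deriv ?_
      push_cast
      ring
    have h2 := (h1.exp).mul_const (erf x)
    refine h2.congr_deriv ?_
    ring

lemma erf_zero : erf 0 = 0 := by
  simp [erf]

lemma sqrt23_sq : Real.sqrt (2/3) ^ 2 = 2/3 :=
  Real.sq_sqrt (by norm_num)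

lemma G_hasDerivAt (z : ℝ) :
    HasDerivAt (fun y : ℝ => Real.sqrt (Real.pi/2) * erf (Real.sqrt (2/3) * y))
      (2 / Real.sqrt 3 * Real.exp (-(2/3) * z ^ 2)) z := by
  have hin : HasDerivAt (fun y : ℝ => Real.sqrt (2/3) * y) (Real.sqrt (2/3)) z := by
    simpa using (hasDerivAt_id z).const_mul (Real.sqrt (2/3))
  have h := ((erf_hasDerivAt (Real.sqrt (2/3) * z)).comp z hin).const_mul
    (Real.sqrt (Real.pi/2))
  refine h.congr_deriv ?_
  have hsq : (Real.sqrt (2/3) * z) ^ 2 = 2/3 * z ^ 2 := by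
    rw [mul_pow, sqrt23_sq]
  rw [hsq]
  have e1 : Real.sqrt (Real.pi/2) = Real.sqrt Real.pi / Real.sqrt 2 := by
    rw [Real.sqrt_div Real.pi_pos.le]
  have e2 : Real.sqrt (2/3) = Real.sqrt 2 / Real.sqrt 3 := by
    rw [Real.sqrt_div (by norm_num : (0:ℝ) ≤ 2)]
  have hπ : Real.sqrt Real.pi ≠ 0 := (Real.sqrt_pos.mpr Real.pi_pos).ne'
  have h2 : Real.sqrt 2 ≠ 0 := by positivity
  have h3 : Real.sqrt 3 ≠ 0 := by positivity
  rw [e1, e2]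
  field_simp

lemma erf_neg (x : ℝ) : erf (-x) = - erf x := by
  rw [erf, erf, ← mul_neg]
  congr 1
  have h1 : (∫ t in (0:ℝ)..(-x), Real.exp (-t ^ 2))
      = ∫ t in (0:ℝ)..(-x), Real.exp (-(-t) ^ 2) := by
    refine intervalIntegral.integral_congr fun t _ => ?_
    ring_nf
  rw [h1, intervalIntegral.integral_comp_neg (fun t => Real.exp (-t ^ 2)), neg_zero,
    intervalIntegral.integral_symm, neg_neg]

lemma Phi_zero : (∫ x : ℝ, Real.exp (-2 * (x - 0) ^ 2) * erf x) = 0 := by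
  have hodd : ∀ x : ℝ, Real.exp (-2 * (-x - 0) ^ 2) * erf (-x)
      = -(Real.exp (-2 * (x - 0) ^ 2) * erf x) := by
    intro x
    rw [erf_neg]
    ring_nf
  have h := (integral_neg_eq_self (fun x : ℝ => Real.exp (-2 * (x - 0) ^ 2) * erf x) volume)
  simp_rw [hodd] at h
  rw [integral_neg] at h
  linarith

lemma Phi_eq (y : ℝ) :
    (∫ x : ℝ, Real.exp (-2 * (x - y) ^ 2) * erf x)
      = Real.sqrt (Real.pi/2) * erf (Real.sqrt (2/3) * y) := by
  set f : ℝ → ℝ := fun y => (∫ x : ℝ, Real.exp (-2 * (x - y) ^ 2) * erf x)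
    - Real.sqrt (Real.pi/2) * erf (Real.sqrt (2/3) * y) with hf
  have hf' : ∀ z, HasDerivAt f 0 z := by
    intro z
    have h0 := (Phi_hasDerivAt z).sub (G_hasDerivAt z)
    rw [sub_self] at h0
    exact h0
  have hconst := is_const_of_deriv_eq_zero
    (fun z => (hf' z).differentiableAt) (fun z => (hf' z).deriv) y 0
  have hzero : f 0 = 0 := by
    rw [hf]
    simp only [mul_zero, erf_zero, Phi_zero]
    ring
  have : f y = 0 := by rw [hconst, hzero]
  rw [hf] at this
  linarith

/-- Gaussian convolution identity for the error function. -/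
theorem gaussian_erf_convolution (y : ℝ) :
    -(Real.sqrt 2 / Real.sqrt Real.pi) *
        ∫ x : ℝ, Real.exp (-2 * (x - y) ^ 2) * (erf x - erf (Real.sqrt 2 * y))
      = erf (Real.sqrt 2 * y) - erf (Real.sqrt (2 / 3) * y) := by
  have hint1 := integrable_gauss_erf two_pos y
  have hint2 : Integrable fun x : ℝ => Real.exp (-2 * (x - y) ^ 2) * erf (Real.sqrt 2 * y) :=
    ((integrable_exp_neg_mul_sq two_pos).comp_sub_right y).mul_const _
  have hsplit : (∫ x : ℝ, Real.exp (-2 * (x - y) ^ 2) * (erf x - erf (Real.sqrt 2 * y)))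
      = (∫ x : ℝ, Real.exp (-2 * (x - y) ^ 2) * erf x)
        - ∫ x : ℝ, Real.exp (-2 * (x - y) ^ 2) * erf (Real.sqrt 2 * y) := by
    rw [← integral_sub hint1 hint2]
    congr 1
    ext x
    ring
  have hgauss : (∫ x : ℝ, Real.exp (-2 * (x - y) ^ 2)) = Real.sqrt (Real.pi/2) := by
    rw [integral_sub_right_eq_self (fun x : ℝ => Real.exp (-2 * x ^ 2)) y, integral_gaussian]
  have h2 : (∫ x : ℝ, Real.exp (-2 * (x - y) ^ 2) * erf (Real.sqrt 2 * y))
      = erf (Real.sqrt 2 * y) * Real.sqrt (Real.pi/2) := by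
    rw [MeasureTheory.integral_mul_const, hgauss, mul_comm]
  rw [hsplit, Phi_eq, h2]
  have e1 : Real.sqrt (Real.pi/2) = Real.sqrt Real.pi / Real.sqrt 2 := by
    rw [Real.sqrt_div Real.pi_pos.le]
  have hπ : Real.sqrt Real.pi ≠ 0 := (Real.sqrt_pos.mpr Real.pi_pos).ne'
  have h2' : Real.sqrt 2 ≠ 0 := by positivity
  rw [e1]
  field_simp
  ring
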